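/- As x → ∞, Σ_{n ≤ x} (μ(n)/n)·log²(x/n) = 2·log x + O(1), i.e. the difference Σ_{n ≤ x} (μ(n)/n)·log²(x/n) − 2·log x is bounded for x ≥ 1; the sum runs over positive integers n ≤ x. -/

import Mathlib

open Real Finset ArithmeticFunction


lemma log_diff_le' (t : ℝ) (ht : 1 ≤ t) : Real.log (t+1) - Real.log t ≤ 1/t := by
  have h0 : (0:ℝ) < t := by linarith
  rw [← Real.log_div (by positivity) (by positivity)]
  have := Real.log_le_sub_one_of_pos (x := (t+1)/t) (by positivity)
  have h2 : (t+1)/t - 1 = 1/t := by field_simp; ring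
  linarith

lemma le_log_diff' (t : ℝ) (ht : 1 ≤ t) : 1/(t+1) ≤ Real.log (t+1) - Real.log t := by
  have h0 : (0:ℝ) < t := by linarith
  have h := Real.log_le_sub_one_of_pos (x := t/(t+1)) (by positivity)
  rw [Real.log_div (by positivity) (by positivity)] at h
  have h2 : t/(t+1) - 1 = -(1/(t+1)) := by field_simp; ring
  linarith

lemma a1_bound (t : ℝ) (h1 : 1 ≤ t) :
    |Real.log t/t - (Real.log (t+1)^2 - Real.log t^2)/2|
      ≤ (2 + Real.log t)/t - (2 + Real.log (t+1))/(t+1) := by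
  have h0 : (0:ℝ) < t := by linarith
  have hu := log_diff_le' t h1
  have hl := le_log_diff' t h1
  have hv : 0 ≤ Real.log t := Real.log_nonneg h1
  have hu2 : Real.log t ≤ Real.log (t+1) := Real.log_le_log (by linarith) (by linarith)
  set u := Real.log (t+1)
  set v := Real.log t
  have hut : (u - v) * t ≤ 1 := by
    have h := mul_le_mul_of_nonneg_right hu (le_of_lt h0)
    have e : (1/t)*t = 1 := by field_simp
    linarith
  have hbb : (1+v)/(t*(t+1)) ≤ (2+v)/t - (2+u)/(t+1) := by
    have e : (2+v)/t - (2+u)/(t+1) = ((2+v)*(t+1) - (2+u)*t)/(t*(t+1)) := by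
      field_simp
    rw [e]
    gcongr
    nlinarith
  have hup : v/t - (u^2 - v^2)/2 ≤ (1+v)/(t*(t+1)) := by
    have key : v/(t+1) ≤ (u^2-v^2)/2 := by
      have e : (u^2-v^2)/2 = (u+v)*(u-v)/2 := by ring
      rw [e]
      have hvt : v/(t+1) = v * (1/(t+1)) := by ring
      rw [hvt]
      nlinarith
    have e2 : v/t - v/(t+1) = v/(t*(t+1)) := by field_simp; ring
    have e3 : v/(t*(t+1)) ≤ (1+v)/(t*(t+1)) := by gcongr; linarith
    linarith
  have hlo : -((1+v)/(t*(t+1))) ≤ v/t - (u^2 - v^2)/2 := by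
    have key : (u^2-v^2)/2 ≤ v/t + 1/(2*t^2) := by
      have e : (u^2-v^2)/2 = (u+v)*(u-v)/2 := by ring
      rw [e]
      have h2 : u+v ≤ 2*v + 1/t := by linarith
      have h3 : 0 ≤ u - v := by linarith
      have h4 : (u-v) ≤ 1/t := hu
      have h6 := mul_le_mul h2 h4 h3 (by positivity : (0:ℝ) ≤ 2*v+1/t)
      have e2 : (2*v+1/t)*(1/t) = 2*(v/t) + 1/t^2 := by field_simp
      have e3 : 1/(2*t^2) = (1/t^2)/2 := by ring
      linarith
    have h5 : 1/(2*t^2) ≤ (1+v)/(t*(t+1)) := by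
      rw [div_le_div_iff₀ (by positivity) (by positivity)]
      nlinarith
    linarith
  rw [abs_le]
  constructor <;> linarith


noncomputable def a0 (i : ℕ) : ℝ := 1/((i:ℝ)+1) - (Real.log ((i:ℝ)+1+1) - Real.log ((i:ℝ)+1))
noncomputable def a1 (i : ℕ) : ℝ :=
  Real.log ((i:ℝ)+1)/((i:ℝ)+1) - (Real.log ((i:ℝ)+1+1)^2 - Real.log ((i:ℝ)+1)^2)/2
noncomputable def bb (i : ℕ) : ℝ := (2 + Real.log ((i:ℝ)+1))/((i:ℝ)+1)

lemma one_le_cast_add_one (i : ℕ) : (1:ℝ) ≤ (i:ℝ)+1 := by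
  have : (0:ℝ) ≤ (i:ℝ) := Nat.cast_nonneg i
  linarith

lemma a0_nonneg (i : ℕ) : 0 ≤ a0 i := by
  have h := log_diff_le' ((i:ℝ)+1) (one_le_cast_add_one i)
  unfold a0; linarith

lemma a0_le (i : ℕ) : a0 i ≤ 1/((i:ℝ)+1) - 1/((i:ℝ)+1+1) := by
  have h := le_log_diff' ((i:ℝ)+1) (one_le_cast_add_one i)
  unfold a0; linarith

lemma a1_abs_le (i : ℕ) : |a1 i| ≤ bb i - bb (i+1) := by
  have h := a1_bound ((i:ℝ)+1) (one_le_cast_add_one i)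
  have e : bb (i+1) = (2 + Real.log ((i:ℝ)+1+1))/((i:ℝ)+1+1) := by
    unfold bb; push_cast; ring_nf
  rw [e]; exact h

lemma bb_nonneg (i : ℕ) : 0 ≤ bb i := by
  unfold bb
  have := Real.log_nonneg (one_le_cast_add_one i)
  positivity

-- partial sums of a0 over range M shifted by N
lemma a0_shift_sum_le (N M : ℕ) :
    ∑ j ∈ Finset.range M, a0 (j+N) ≤ 1/((N:ℝ)+1) := by
  have h : ∑ j ∈ Finset.range M, a0 (j+N)
      ≤ ∑ j ∈ Finset.range M, (1/(((j+N:ℕ):ℝ)+1) - 1/((((j+1)+N:ℕ):ℝ)+1)) := by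
    apply Finset.sum_le_sum
    intro j _
    have := a0_le (j+N)
    push_cast at this ⊢
    ring_nf at this ⊢
    linarith
  rw [Finset.sum_range_sub' (f := fun j => 1/(((j+N:ℕ):ℝ)+1))] at h
  have h2 : (0:ℝ) ≤ 1/(((M+N:ℕ):ℝ)+1) := by positivity
  simp only [Nat.zero_add] at h
  linarith

lemma a1_shift_sum_le (N M : ℕ) :
    ∑ j ∈ Finset.range M, |a1 (j+N)| ≤ bb N := by
  have h : ∑ j ∈ Finset.range M, |a1 (j+N)|
      ≤ ∑ j ∈ Finset.range M, (bb (j+N) - bb ((j+1)+N)) := by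
    apply Finset.sum_le_sum
    intro j _
    have h1 := a1_abs_le (j+N)
    have e : (j+N)+1 = (j+1)+N := by omega
    rw [e] at h1
    exact h1
  rw [Finset.sum_range_sub' (f := fun j => bb (j+N))] at h
  have h2 := bb_nonneg (M+N)
  simp only [Nat.zero_add] at h
  linarith

lemma summable_a0 : Summable a0 :=
  summable_of_sum_range_le a0_nonneg (fun M => by simpa using a0_shift_sum_le 0 M)

lemma summable_abs_a1 : Summable (fun i => |a1 i|) :=
  summable_of_sum_range_le (fun i => abs_nonneg _)
    (fun M => by simpa using a1_shift_sum_le 0 M)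

lemma summable_a1 : Summable a1 := summable_abs_a1.of_abs

noncomputable def c0 : ℝ := ∑' i, a0 i
noncomputable def c1 : ℝ := ∑' i, a1 i

lemma a0_tail (N : ℕ) :
    |c0 - ∑ i ∈ Finset.range N, a0 i| ≤ 1/((N:ℝ)+1) := by
  have h := Summable.sum_add_tsum_nat_add (f := a0) N summable_a0
  have e : c0 - ∑ i ∈ Finset.range N, a0 i = ∑' j, a0 (j+N) := by
    unfold c0; rw [← h]; ring
  rw [e]
  rw [abs_of_nonneg (tsum_nonneg (fun j => a0_nonneg _))]
  exact Real.tsum_le_of_sum_range_le (fun j => a0_nonneg _) (fun M => a0_shift_sum_le N M)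

lemma a1_tail (N : ℕ) :
    |c1 - ∑ i ∈ Finset.range N, a1 i| ≤ bb N := by
  have h := Summable.sum_add_tsum_nat_add (f := a1) N summable_a1
  have e : c1 - ∑ i ∈ Finset.range N, a1 i = ∑' j, a1 (j+N) := by
    unfold c1; rw [← h]; ring
  rw [e]
  calc |∑' j, a1 (j+N)| ≤ ∑' j, |a1 (j+N)| := by
        simpa using norm_tsum_le_tsum_norm (f := fun j => a1 (j+N))
          (by simpa using ((summable_nat_add_iff N).2 summable_abs_a1 : Summable (fun i => |a1 (i+N)|)))
  _ ≤ bb N := Real.tsum_le_of_sum_range_le (fun j => abs_nonneg _)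
        (fun M => a1_shift_sum_le N M)


lemma tele (f : ℕ → ℝ) (N : ℕ) : ∑ i ∈ Finset.range N, (f (i+1) - f i) = f N - f 0 :=
  Finset.sum_range_sub f N

lemma sum_a0_eq (N : ℕ) :
    ∑ i ∈ Finset.range N, a0 i = (∑ m ∈ Finset.Icc 1 N, 1/(m:ℝ)) - Real.log ((N:ℝ)+1) := by
  unfold a0
  rw [Finset.sum_sub_distrib]
  have t1 : ∑ i ∈ Finset.range N, (Real.log ((i:ℝ)+1+1) - Real.log ((i:ℝ)+1))
      = Real.log ((N:ℝ)+1) - Real.log ((0:ℕ)+1) := by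
    rw [← tele (fun j : ℕ => Real.log ((j:ℝ)+1)) N]
    apply Finset.sum_congr rfl
    intro i _
    push_cast
    norm_num
  have t2 : ∑ i ∈ Finset.range N, 1/((i:ℝ)+1) = ∑ m ∈ Finset.Icc 1 N, 1/(m:ℝ) := by
    rw [← Finset.Ico_add_one_right_eq_Icc, Finset.sum_Ico_eq_sum_range]
    apply Finset.sum_congr rfl
    intro i _
    push_cast
    ring
  rw [t1, t2]
  norm_num

lemma sum_a1_eq (N : ℕ) :
    ∑ i ∈ Finset.range N, a1 i
      = (∑ m ∈ Finset.Icc 1 N, Real.log m/(m:ℝ)) - Real.log ((N:ℝ)+1)^2/2 := by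
  unfold a1
  rw [Finset.sum_sub_distrib]
  have t1 : ∑ i ∈ Finset.range N, (Real.log ((i:ℝ)+1+1)^2 - Real.log ((i:ℝ)+1)^2)/2
      = Real.log ((N:ℝ)+1)^2/2 - Real.log (((0:ℕ):ℝ)+1)^2/2 := by
    rw [← tele (fun j : ℕ => Real.log ((j:ℝ)+1)^2/2) N]
    apply Finset.sum_congr rfl
    intro i _
    push_cast
    ring
  have t2 : ∑ i ∈ Finset.range N, Real.log ((i:ℝ)+1)/((i:ℝ)+1)
      = ∑ m ∈ Finset.Icc 1 N, Real.log m/(m:ℝ) := by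
    rw [← Finset.Ico_add_one_right_eq_Icc, Finset.sum_Ico_eq_sum_range]
    apply Finset.sum_congr rfl
    intro i _
    push_cast
    ring_nf
  rw [t1, t2]
  norm_num

lemma floor_facts (y : ℝ) (hy : 1 ≤ y) :
    1 ≤ ⌊y⌋₊ ∧ (⌊y⌋₊:ℝ) ≤ y ∧ y < (⌊y⌋₊:ℝ)+1 := by
  refine ⟨Nat.one_le_floor_iff y |>.mpr hy, Nat.floor_le (by linarith), ?_⟩
  exact Nat.lt_floor_add_one y

lemma H0_approx (y : ℝ) (hy : 1 ≤ y) :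
    |(∑ m ∈ Finset.Icc 1 ⌊y⌋₊, 1/(m:ℝ)) - Real.log y - c0| ≤ 3/y := by
  obtain ⟨hN1, hNy, hyN⟩ := floor_facts y hy
  set N := ⌊y⌋₊
  have hNpos : (1:ℝ) ≤ (N:ℝ) := by exact_mod_cast hN1
  have hy0 : (0:ℝ) < y := by linarith
  have h1 := a0_tail N
  rw [sum_a0_eq] at h1
  -- δ = log(N+1) - log y
  have hδ0 : Real.log y ≤ Real.log ((N:ℝ)+1) := Real.log_le_log hy0 (by linarith)
  have hδ1 : Real.log ((N:ℝ)+1) - Real.log y ≤ 2/y := by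
    have h2 := log_diff_le' (N:ℝ) hNpos
    have h3 : Real.log (N:ℝ) ≤ Real.log y := Real.log_le_log (by linarith) hNy
    have h4 : 1/(N:ℝ) ≤ 2/y := by
      rw [div_le_div_iff₀ (by linarith) hy0]
      linarith
    linarith
  have h5 : 1/((N:ℝ)+1) ≤ 1/y := by
    rw [div_le_div_iff₀ (by linarith) hy0]
    linarith
  rw [abs_le] at h1 ⊢
  have e3 : 3/y = 1/y + 2/y := by ring
  have h2y : (0:ℝ) ≤ 2/y := by positivity
  constructor
  · linarith [h1.1, h1.2]
  · linarith [h1.1, h1.2]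

lemma H1_approx (y : ℝ) (hy : 1 ≤ y) :
    |(∑ m ∈ Finset.Icc 1 ⌊y⌋₊, Real.log m/(m:ℝ)) - Real.log y^2/2 - c1|
      ≤ 6*(1+Real.log y)/y := by
  obtain ⟨hN1, hNy, hyN⟩ := floor_facts y hy
  set N := ⌊y⌋₊
  have hNpos : (1:ℝ) ≤ (N:ℝ) := by exact_mod_cast hN1
  have hy0 : (0:ℝ) < y := by linarith
  have hly : 0 ≤ Real.log y := Real.log_nonneg hy
  have h1 := a1_tail N
  rw [sum_a1_eq] at h1
  have hδ0 : Real.log y ≤ Real.log ((N:ℝ)+1) := Real.log_le_log hy0 (by linarith)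
  have hδ1 : Real.log ((N:ℝ)+1) - Real.log y ≤ 2/y := by
    have h2 := log_diff_le' (N:ℝ) hNpos
    have h3 : Real.log (N:ℝ) ≤ Real.log y := Real.log_le_log (by linarith) hNy
    have h4 : 1/(N:ℝ) ≤ 2/y := by
      rw [div_le_div_iff₀ (by linarith) hy0]
      linarith
    linarith
  -- |log(N+1)²/2 - log y²/2| ≤ (2 log y + 2)/y
  have hsq : Real.log ((N:ℝ)+1)^2/2 - Real.log y^2/2 ≤ (2*Real.log y + 2)/y := by
    have e : Real.log ((N:ℝ)+1)^2/2 - Real.log y^2/2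
        = (Real.log ((N:ℝ)+1) + Real.log y) * (Real.log ((N:ℝ)+1) - Real.log y)/2 := by ring
    rw [e]
    have h2y : 0 < 2/y := by positivity
    have hyinv : 1/y ≤ 1 := by rw [div_le_one hy0]; exact hy
    have hb : Real.log ((N:ℝ)+1) + Real.log y ≤ 2*Real.log y + 2/y := by linarith
    have hprod : (Real.log ((N:ℝ)+1) + Real.log y) * (Real.log ((N:ℝ)+1) - Real.log y)
        ≤ (2*Real.log y + 2/y) * (2/y) := by
      apply mul_le_mul hb hδ1 (by linarith) (by positivity)
    have e2 : (2*Real.log y + 2/y) * (2/y) / 2 = (2*Real.log y + 2/y)/y := by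
      field_simp
    have hy2 : 2/y ≤ 2 := by rw [div_le_iff₀ hy0]; nlinarith
    have e3 : (2*Real.log y + 2/y)/y ≤ (2*Real.log y + 2)/y := by
      gcongr <;> linarith
    linarith
  have hsq0 : 0 ≤ Real.log ((N:ℝ)+1)^2/2 - Real.log y^2/2 := by
    have : Real.log y ≤ Real.log ((N:ℝ)+1) := hδ0
    nlinarith
  -- bb N ≤ (4 + log y)/y
  have hbbN : bb N ≤ (4 + Real.log y)/y := by
    unfold bb
    have h2 : 2 + Real.log ((N:ℝ)+1) ≤ 4 + Real.log y := by
      have hyinv : 2/y ≤ 2 := by rw [div_le_iff₀ hy0]; nlinarith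
      linarith
    exact div_le_div₀ (by linarith) h2 hy0 (by linarith)
  rw [abs_le] at h1 ⊢
  have e6 : (4+Real.log y)/y + (2*Real.log y+2)/y = (6+3*Real.log y)/y := by
    rw [← add_div]; ring_nf
  have e7 : (6+3*Real.log y)/y ≤ 6*(1+Real.log y)/y := by
    gcongr <;> linarith
  constructor
  · linarith [h1.1, h1.2]
  · linarith [h1.1, h1.2]


lemma mem_inner_iff (x : ℝ) (hx : 0 ≤ x) (n m : ℕ) (hn : 1 ≤ n) :
    m ≤ ⌊x/n⌋₊ ↔ n*m ≤ ⌊x⌋₊ := by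
  have hn0 : (0:ℝ) < n := by exact_mod_cast hn
  rw [Nat.le_floor_iff (by positivity), Nat.le_floor_iff hx]
  rw [le_div_iff₀ hn0]
  constructor
  · intro h; push_cast; linarith [h]
  · intro h; push_cast at h; linarith [h]

lemma key_conv (x : ℝ) (hx : 1 ≤ x) (f : ℕ → ℝ) :
    ∑ n ∈ Finset.Icc 1 ⌊x⌋₊, ∑ m ∈ Finset.Icc 1 ⌊x/n⌋₊, (moebius n : ℝ) * f (n*m)
      = f 1 := by
  have hx0 : (0:ℝ) ≤ x := by linarith
  rw [Finset.sum_sigma']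
  have hbij : ∑ p ∈ (Finset.Icc 1 ⌊x⌋₊).sigma (fun n => Finset.Icc 1 ⌊x/n⌋₊),
        (moebius p.1 : ℝ) * f (p.1 * p.2)
      = ∑ p ∈ (Finset.Icc 1 ⌊x⌋₊).sigma (fun k => k.divisors),
        (moebius p.2 : ℝ) * f p.1 := by
    apply Finset.sum_nbij' (i := fun p => ⟨p.1 * p.2, p.1⟩)
      (j := fun p => ⟨p.2, p.1 / p.2⟩)
    · rintro ⟨n, m⟩ hp
      simp only [Finset.mem_sigma, Finset.mem_Icc] at hp ⊢
      obtain ⟨⟨hn1, hnN⟩, hm1, hmN⟩ := hp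
      have h := (mem_inner_iff x hx0 n m hn1).mp hmN
      refine ⟨⟨?_, h⟩, ?_⟩
      · exact Nat.one_le_iff_ne_zero.mpr (by positivity)
      · exact Nat.mem_divisors.mpr ⟨Dvd.intro m rfl, by positivity⟩
    · rintro ⟨k, d⟩ hp
      simp only [Finset.mem_sigma, Finset.mem_Icc, Nat.mem_divisors] at hp ⊢
      obtain ⟨⟨hk1, hkN⟩, hdk, hk0⟩ := hp
      obtain ⟨m, rfl⟩ := hdk
      have hd1 : 1 ≤ d := Nat.one_le_iff_ne_zero.mpr (by rintro rfl; simp at hk0)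
      have hm1 : 1 ≤ m := Nat.one_le_iff_ne_zero.mpr (by rintro rfl; simp at hk0)
      rw [Nat.mul_div_cancel_left m (by omega : 0 < d)]
      refine ⟨⟨hd1, ?_⟩, hm1 , ?_⟩
      · exact le_trans (Nat.le_mul_of_pos_right d hm1) hkN
      · exact (mem_inner_iff x hx0 d m hd1).mpr hkN
    · rintro ⟨n, m⟩ hp
      simp only [Finset.mem_sigma, Finset.mem_Icc] at hp
      obtain ⟨⟨hn1, _⟩, _, _⟩ := hp
      simp [Nat.mul_div_cancel_left m (by omega : 0 < n)]
    · rintro ⟨k, d⟩ hp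
      simp only [Finset.mem_sigma, Nat.mem_divisors] at hp
      obtain ⟨_, hdk, hk0⟩ := hp
      simp [Nat.mul_div_cancel' hdk]
    · rintro ⟨n, m⟩ _
      rfl
  rw [hbij, Finset.sum_sigma]
  have inner : ∀ k : ℕ, k ≠ 0 → ∑ d ∈ k.divisors, (moebius d : ℝ)
      = if k = 1 then 1 else 0 := by
    intro k hk
    have h := congrArg (fun g => g k) (moebius_mul_coe_zeta)
    simp only [coe_mul_zeta_apply, one_apply] at h
    have : (∑ d ∈ k.divisors, moebius d : ℤ) = if k = 1 then 1 else 0 := h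
    exact_mod_cast congrArg (fun z : ℤ => (z : ℝ)) this
  have hNx : 1 ≤ ⌊x⌋₊ := Nat.one_le_floor_iff x |>.mpr hx
  show ∑ k ∈ Finset.Icc 1 ⌊x⌋₊, ∑ d ∈ k.divisors, (moebius d : ℝ) * f k = f 1
  have step : ∀ k ∈ Finset.Icc 1 ⌊x⌋₊,
      (∑ d ∈ k.divisors, (moebius d : ℝ) * f k) = (if k = 1 then (1:ℝ) else 0) * f k := by
    intro k hk
    rw [← Finset.sum_mul, inner k (by simp only [Finset.mem_Icc] at hk; omega)]
  rw [Finset.sum_congr rfl step]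
  rw [Finset.sum_eq_single 1]
  · simp
  · intro k _ hk1
    simp [hk1]
  · intro h
    exact absurd (Finset.mem_Icc.mpr ⟨le_refl 1, hNx⟩) h


-- sqrt partial sum bound
lemma sum_inv_sqrt_le (N : ℕ) : ∑ n ∈ Finset.Icc 1 N, 1/Real.sqrt n ≤ 2*Real.sqrt N := by
  induction N with
  | zero => simp
  | succ N ih =>
    rw [Finset.sum_Icc_succ_top (by omega : 1 ≤ N+1)]
    have ha : Real.sqrt N ^ 2 = N := Real.sq_sqrt (Nat.cast_nonneg N)
    have hb : Real.sqrt (N+1) ^ 2 = (N:ℝ)+1 := by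
      rw [Real.sq_sqrt (by positivity)]
    have hb0 : 0 < Real.sqrt ((N:ℝ)+1) := Real.sqrt_pos.mpr (by positivity)
    have ha0 : 0 ≤ Real.sqrt (N:ℝ) := Real.sqrt_nonneg _
    have key : 1/Real.sqrt ((N:ℝ)+1) ≤ 2*Real.sqrt ((N:ℝ)+1) - 2*Real.sqrt (N:ℝ) := by
      rw [div_le_iff₀ hb0]
      nlinarith [sq_nonneg (Real.sqrt (N:ℝ) - Real.sqrt ((N:ℝ)+1))]
    have e : ((N+1:ℕ):ℝ) = (N:ℝ)+1 := by push_cast; ring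
    rw [e]
    linarith
-- log t ≤ 2 sqrt t
lemma log_le_two_sqrt (t : ℝ) (ht : 1 ≤ t) : Real.log t ≤ 2*Real.sqrt t := by
  have h0 : (0:ℝ) < t := by linarith
  have h1 : Real.log (Real.sqrt t) ≤ Real.sqrt t - 1 :=
    Real.log_le_sub_one_of_pos (Real.sqrt_pos.mpr h0)
  rw [Real.log_sqrt h0.le] at h1
  linarith [Real.sqrt_nonneg t]

lemma sum_one_add_log_le (x : ℝ) (hx : 1 ≤ x) :
    ∑ n ∈ Finset.Icc 1 ⌊x⌋₊, (1 + Real.log (x/n)) ≤ 5*x := by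
  have hx0 : (0:ℝ) < x := by linarith
  have hNle : (⌊x⌋₊:ℝ) ≤ x := Nat.floor_le hx0.le
  have step : ∀ n ∈ Finset.Icc 1 ⌊x⌋₊, 1 + Real.log (x/n) ≤ 1 + 2*Real.sqrt x * (1/Real.sqrt n) := by
    intro n hn
    simp only [Finset.mem_Icc] at hn
    have hn1 : (1:ℝ) ≤ n := by exact_mod_cast hn.1
    have hnx : (n:ℝ) ≤ x := le_trans (by exact_mod_cast hn.2) hNle
    have hyx : 1 ≤ x/(n:ℝ) := by rw [le_div_iff₀ (by linarith)]; linarith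
    have h2 := log_le_two_sqrt (x/n) hyx
    have e : Real.sqrt (x/n) = Real.sqrt x * (1/Real.sqrt n) := by
      rw [Real.sqrt_div hx0.le, div_eq_mul_inv, one_div]
    rw [e] at h2
    linarith [h2]
  calc ∑ n ∈ Finset.Icc 1 ⌊x⌋₊, (1 + Real.log (x/n))
      ≤ ∑ n ∈ Finset.Icc 1 ⌊x⌋₊, (1 + 2*Real.sqrt x * (1/Real.sqrt n)) :=
        Finset.sum_le_sum step
    _ = ⌊x⌋₊ + 2*Real.sqrt x * ∑ n ∈ Finset.Icc 1 ⌊x⌋₊, 1/Real.sqrt n := by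
        rw [Finset.sum_add_distrib, ← Finset.mul_sum]
        simp
    _ ≤ x + 2*Real.sqrt x * (2*Real.sqrt ⌊x⌋₊) := by
        have h3 := sum_inv_sqrt_le ⌊x⌋₊
        have h4 : (0:ℝ) ≤ 2*Real.sqrt x := by positivity
        nlinarith [Real.sqrt_nonneg x, h3]
    _ ≤ x + 4*x := by
        have h5 : Real.sqrt (⌊x⌋₊:ℝ) ≤ Real.sqrt x := Real.sqrt_le_sqrt hNle
        have h6 : Real.sqrt x * Real.sqrt x = x := Real.mul_self_sqrt hx0.le
        nlinarith [Real.sqrt_nonneg x, Real.sqrt_nonneg (⌊x⌋₊:ℝ)]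
    _ = 5*x := by ring


lemma F1_approx (y : ℝ) (hy : 1 ≤ y) :
    |(∑ m ∈ Finset.Icc 1 ⌊y⌋₊, Real.log (y/m)/m)
      - (Real.log y^2/2 + c0*Real.log y - c1)| ≤ 9*(1+Real.log y)/y := by
  have hy0 : (0:ℝ) < y := by linarith
  have hL : 0 ≤ Real.log y := Real.log_nonneg hy
  have hsplit : (∑ m ∈ Finset.Icc 1 ⌊y⌋₊, Real.log (y/m)/m)
      = Real.log y * (∑ m ∈ Finset.Icc 1 ⌊y⌋₊, 1/(m:ℝ))
        - (∑ m ∈ Finset.Icc 1 ⌊y⌋₊, Real.log m/(m:ℝ)) := by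
    rw [Finset.mul_sum, ← Finset.sum_sub_distrib]
    apply Finset.sum_congr rfl
    intro m hm
    simp only [Finset.mem_Icc] at hm
    have hm0 : (0:ℝ) < m := by exact_mod_cast hm.1
    rw [Real.log_div (by linarith) (by linarith)]
    ring
  set H0 := ∑ m ∈ Finset.Icc 1 ⌊y⌋₊, 1/(m:ℝ)
  set H1 := ∑ m ∈ Finset.Icc 1 ⌊y⌋₊, Real.log m/(m:ℝ)
  have he0 := H0_approx y hy
  have he1 := H1_approx y hy
  rw [hsplit]
  have e : Real.log y * H0 - H1 - (Real.log y^2/2 + c0*Real.log y - c1)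
      = Real.log y * (H0 - Real.log y - c0) - (H1 - Real.log y^2/2 - c1) := by ring
  rw [e]
  calc |Real.log y * (H0 - Real.log y - c0) - (H1 - Real.log y^2/2 - c1)|
      ≤ |Real.log y * (H0 - Real.log y - c0)| + |H1 - Real.log y^2/2 - c1| := abs_sub _ _
    _ ≤ Real.log y * (3/y) + 6*(1+Real.log y)/y := by
        rw [abs_mul, abs_of_nonneg hL]
        have := mul_le_mul_of_nonneg_left he0 hL
        linarith
    _ ≤ 9*(1+Real.log y)/y := by
        have e2 : Real.log y * (3/y) = 3*Real.log y/y := by ring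
        have e3 : 3*Real.log y/y + 6*(1+Real.log y)/y = (6+9*Real.log y)/y := by
          rw [← add_div]; ring_nf
        have e4 : (6+9*Real.log y)/y ≤ 9*(1+Real.log y)/y := by gcongr <;> linarith
        linarith

lemma abs_moebius_real (n : ℕ) : |(moebius n : ℝ)| ≤ 1 := by
  have h := ArithmeticFunction.abs_moebius_le_one (n := n)
  exact_mod_cast h

theorem moebius_div_log_sq_sum :
    ∃ C : ℝ, ∀ x : ℝ, 1 ≤ x →
      |(∑ n ∈ Finset.Icc 1 ⌊x⌋₊, (moebius n : ℝ) / n * (Real.log (x / n)) ^ 2)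
        - 2 * Real.log x| ≤ C := by
  use 2 * |c0| * (4 + 2 * |c0|) + 4 * |c1| + 90
  intro x hx
  have hx0 : (0:ℝ) < x := by linarith
  have hNx : 1 ≤ ⌊x⌋₊ := Nat.one_le_floor_iff x |>.mpr hx
  have hNle : (⌊x⌋₊:ℝ) ≤ x := Nat.floor_le hx0.le
  set N := ⌊x⌋₊ with hN
  -- basic facts for n in range
  have hfacts : ∀ n ∈ Finset.Icc 1 N, (1:ℝ) ≤ (n:ℝ) ∧ (n:ℝ) ≤ x ∧ 1 ≤ x/(n:ℝ) := by
    intro n hn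
    simp only [Finset.mem_Icc] at hn
    have h1 : (1:ℝ) ≤ n := by exact_mod_cast hn.1
    have h2 : (n:ℝ) ≤ x := le_trans (by exact_mod_cast hn.2) hNle
    exact ⟨h1, h2, by rw [le_div_iff₀ (by linarith)]; linarith⟩
  set S0 := ∑ n ∈ Finset.Icc 1 N, (moebius n : ℝ)/n with hS0def
  set S1 := ∑ n ∈ Finset.Icc 1 N, (moebius n : ℝ)/n * Real.log (x/n) with hS1def
  set S2 := ∑ n ∈ Finset.Icc 1 N, (moebius n : ℝ)/n * Real.log (x/n)^2 with hS2def
  -- Step 1 : |S0| ≤ 2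
  have hC1 : ∑ n ∈ Finset.Icc 1 N, (moebius n : ℝ) * (⌊x/n⌋₊:ℝ) = 1 := by
    have h := key_conv x hx (fun _ => (1:ℝ))
    simp only [mul_one] at h
    rw [← h]
    apply Finset.sum_congr rfl
    intro n _
    rw [Finset.sum_const, Nat.card_Icc]
    simp [mul_comm]
  have hS0 : |S0| ≤ 2 := by
    have hdiff : |x * S0 - 1| ≤ x := by
      rw [← hC1]
      rw [hS0def, Finset.mul_sum, ← Finset.sum_sub_distrib]
      calc |∑ n ∈ Finset.Icc 1 N, (x * ((moebius n:ℝ)/n) - (moebius n:ℝ) * (⌊x/n⌋₊:ℝ))|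
          ≤ ∑ n ∈ Finset.Icc 1 N, |x * ((moebius n:ℝ)/n) - (moebius n:ℝ) * (⌊x/n⌋₊:ℝ)| :=
            Finset.abs_sum_le_sum_abs _ _
        _ ≤ ∑ n ∈ Finset.Icc 1 N, 1 := by
            apply Finset.sum_le_sum
            intro n hn
            obtain ⟨h1, h2, h3⟩ := hfacts n hn
            have hn0 : (0:ℝ) < n := by linarith
            have e : x * ((moebius n:ℝ)/n) - (moebius n:ℝ) * (⌊x/n⌋₊:ℝ)
                = (moebius n:ℝ) * (x/n - (⌊x/n⌋₊:ℝ)) := by field_simp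
            rw [e, abs_mul]
            have hfr0 : 0 ≤ x/n - (⌊x/n⌋₊:ℝ) := by
              have := Nat.floor_le (le_trans zero_le_one h3)
              linarith
            have hfr1 : x/n - (⌊x/n⌋₊:ℝ) ≤ 1 := by
              have := Nat.lt_floor_add_one (x/(n:ℝ))
              linarith
            have := abs_moebius_real n
            rw [abs_of_nonneg hfr0]
            nlinarith
        _ = N := by simp
        _ ≤ x := hNle
    have h2x : |x * S0| ≤ 1 + x := by
      have := abs_sub_abs_le_abs_sub (x * S0) 1
      simp only [abs_one] at this
      linarith [hdiff, abs_sub_abs_le_abs_sub (x*S0) 1]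
    rw [abs_mul, abs_of_pos hx0] at h2x
    have h2 : x * |S0| ≤ x * 2 := by linarith
    exact le_of_mul_le_mul_left h2 hx0
  -- Step 2 : identity I0
  have hI0 : ∑ n ∈ Finset.Icc 1 N, (moebius n : ℝ)/n * (∑ m ∈ Finset.Icc 1 ⌊x/(n:ℝ)⌋₊, 1/(m:ℝ)) = 1 := by
    calc ∑ n ∈ Finset.Icc 1 N, (moebius n : ℝ)/n * (∑ m ∈ Finset.Icc 1 ⌊x/(n:ℝ)⌋₊, 1/(m:ℝ))
        = ∑ n ∈ Finset.Icc 1 N, ∑ m ∈ Finset.Icc 1 ⌊x/(n:ℝ)⌋₊, (moebius n : ℝ) * (1/((n*m:ℕ):ℝ)) := by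
          apply Finset.sum_congr rfl
          intro n hn
          obtain ⟨h1, _, _⟩ := hfacts n hn
          have hn0 : (0:ℝ) < n := by linarith
          rw [Finset.mul_sum]
          apply Finset.sum_congr rfl
          intro m hm
          simp only [Finset.mem_Icc] at hm
          have hm0 : (0:ℝ) < m := by exact_mod_cast hm.1
          push_cast
          rw [one_div, one_div, mul_inv]
          field_simp
      _ = 1 := by simpa using key_conv x hx (fun k => 1/(k:ℝ))
  -- Step 3 : ε0 bound, S1 bound
  have hε0 : |1 - S1 - c0 * S0| ≤ 3 := by
    have esum : ∑ n ∈ Finset.Icc 1 N, (moebius n : ℝ)/n *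
            ((∑ m ∈ Finset.Icc 1 ⌊x/(n:ℝ)⌋₊, 1/(m:ℝ)) - Real.log (x/n) - c0)
        = (∑ n ∈ Finset.Icc 1 N, (moebius n : ℝ)/n * (∑ m ∈ Finset.Icc 1 ⌊x/(n:ℝ)⌋₊, 1/(m:ℝ)))
          - S1 - c0 * S0 := by
      rw [hS1def, hS0def, Finset.mul_sum, ← Finset.sum_sub_distrib, ← Finset.sum_sub_distrib]
      apply Finset.sum_congr rfl
      intro n _
      ring
    have e : 1 - S1 - c0 * S0
        = ∑ n ∈ Finset.Icc 1 N, (moebius n : ℝ)/n *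
            ((∑ m ∈ Finset.Icc 1 ⌊x/(n:ℝ)⌋₊, 1/(m:ℝ)) - Real.log (x/n) - c0) := by
      rw [esum, hI0]
    rw [e]
    calc |∑ n ∈ Finset.Icc 1 N, (moebius n : ℝ)/n *
            ((∑ m ∈ Finset.Icc 1 ⌊x/(n:ℝ)⌋₊, 1/(m:ℝ)) - Real.log (x/n) - c0)|
        ≤ ∑ n ∈ Finset.Icc 1 N, |(moebius n : ℝ)/n *
            ((∑ m ∈ Finset.Icc 1 ⌊x/(n:ℝ)⌋₊, 1/(m:ℝ)) - Real.log (x/n) - c0)| :=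
          Finset.abs_sum_le_sum_abs _ _
      _ ≤ ∑ n ∈ Finset.Icc 1 N, 3/x := by
          apply Finset.sum_le_sum
          intro n hn
          obtain ⟨h1, h2, h3⟩ := hfacts n hn
          have hn0 : (0:ℝ) < n := by linarith
          rw [abs_mul, abs_div]
          have hmo := abs_moebius_real n
          have hH := H0_approx (x/n) h3
          have habs_n : |(n:ℝ)| = n := abs_of_pos hn0
          rw [habs_n]
          have hb1 : |(moebius n:ℝ)|/(n:ℝ) ≤ 1/(n:ℝ) := by gcongr
          have hb2 : 3/(x/(n:ℝ)) = 3*(n:ℝ)/x := by field_simp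
          rw [hb2] at hH
          have := mul_le_mul hb1 hH (abs_nonneg _) (by positivity : (0:ℝ) ≤ 1/(n:ℝ))
          have e5 : 1/(n:ℝ) * (3*(n:ℝ)/x) = 3/x := by field_simp
          linarith
      _ = N * (3/x) := by rw [Finset.sum_const, Nat.card_Icc]; simp
      _ ≤ 3 := by
          have h7 : (N:ℝ)*(3/x) ≤ x*(3/x) := by
            apply mul_le_mul_of_nonneg_right hNle (by positivity)
          have e8 : x*(3/x) = 3 := by field_simp
          linarith
  -- Step 4 : |S1| bound
  have hS1 : |S1| ≤ 4 + 2*|c0| := by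
    have e : S1 = 1 - c0*S0 - (1 - S1 - c0*S0) := by ring
    rw [e]
    calc |1 - c0*S0 - (1 - S1 - c0*S0)| ≤ |1 - c0*S0| + |1 - S1 - c0*S0| := abs_sub _ _
      _ ≤ (1 + |c0*S0|) + 3 := by
          have h1 : |1 - c0*S0| ≤ |(1:ℝ)| + |c0*S0| := abs_sub _ _
          simp only [abs_one] at h1
          linarith
      _ ≤ 4 + 2*|c0| := by
          rw [abs_mul]
          have := mul_le_mul_of_nonneg_left hS0 (abs_nonneg c0)
          linarith
  -- Step 5 : identity I1
  have hI1 : ∑ n ∈ Finset.Icc 1 N, (moebius n : ℝ)/n *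
      (∑ m ∈ Finset.Icc 1 ⌊x/(n:ℝ)⌋₊, Real.log ((x/(n:ℝ))/m)/(m:ℝ)) = Real.log x := by
    calc ∑ n ∈ Finset.Icc 1 N, (moebius n : ℝ)/n *
        (∑ m ∈ Finset.Icc 1 ⌊x/(n:ℝ)⌋₊, Real.log ((x/(n:ℝ))/m)/(m:ℝ))
        = ∑ n ∈ Finset.Icc 1 N, ∑ m ∈ Finset.Icc 1 ⌊x/(n:ℝ)⌋₊,
            (moebius n : ℝ) * (Real.log (x/((n*m:ℕ):ℝ))/((n*m:ℕ):ℝ)) := by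
          apply Finset.sum_congr rfl
          intro n hn
          obtain ⟨h1, _, _⟩ := hfacts n hn
          have hn0 : (0:ℝ) < n := by linarith
          rw [Finset.mul_sum]
          apply Finset.sum_congr rfl
          intro m hm
          simp only [Finset.mem_Icc] at hm
          have hm0 : (0:ℝ) < m := by exact_mod_cast hm.1
          push_cast
          rw [div_div]
          field_simp
      _ = Real.log x := by
          have h := key_conv x hx (fun k => Real.log (x/(k:ℝ))/(k:ℝ))
          simpa using h
  -- Step 6 : ε1 bound
  have hε1 : |Real.log x - (S2/2 + c0*S1 - c1*S0)| ≤ 45 := by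
    have esum : ∑ n ∈ Finset.Icc 1 N, (moebius n : ℝ)/n *
            ((∑ m ∈ Finset.Icc 1 ⌊x/(n:ℝ)⌋₊, Real.log ((x/(n:ℝ))/m)/(m:ℝ))
              - (Real.log (x/n)^2/2 + c0*Real.log (x/n) - c1))
        = (∑ n ∈ Finset.Icc 1 N, (moebius n : ℝ)/n *
            (∑ m ∈ Finset.Icc 1 ⌊x/(n:ℝ)⌋₊, Real.log ((x/(n:ℝ))/m)/(m:ℝ)))
          - (S2/2 + c0*S1 - c1*S0) := by
      rw [hS2def, hS1def, hS0def, Finset.sum_div, Finset.mul_sum, Finset.mul_sum]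
      rw [← Finset.sum_add_distrib, ← Finset.sum_sub_distrib, ← Finset.sum_sub_distrib]
      apply Finset.sum_congr rfl
      intro n _
      ring
    have e : Real.log x - (S2/2 + c0*S1 - c1*S0)
        = ∑ n ∈ Finset.Icc 1 N, (moebius n : ℝ)/n *
            ((∑ m ∈ Finset.Icc 1 ⌊x/(n:ℝ)⌋₊, Real.log ((x/(n:ℝ))/m)/(m:ℝ))
              - (Real.log (x/n)^2/2 + c0*Real.log (x/n) - c1)) := by
      rw [esum, hI1]
    rw [e]
    calc |∑ n ∈ Finset.Icc 1 N, (moebius n : ℝ)/n *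
            ((∑ m ∈ Finset.Icc 1 ⌊x/(n:ℝ)⌋₊, Real.log ((x/(n:ℝ))/m)/(m:ℝ))
              - (Real.log (x/n)^2/2 + c0*Real.log (x/n) - c1))|
        ≤ ∑ n ∈ Finset.Icc 1 N, |(moebius n : ℝ)/n *
            ((∑ m ∈ Finset.Icc 1 ⌊x/(n:ℝ)⌋₊, Real.log ((x/(n:ℝ))/m)/(m:ℝ))
              - (Real.log (x/n)^2/2 + c0*Real.log (x/n) - c1))| :=
          Finset.abs_sum_le_sum_abs _ _
      _ ≤ ∑ n ∈ Finset.Icc 1 N, (9/x)*(1 + Real.log (x/n)) := by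
          apply Finset.sum_le_sum
          intro n hn
          obtain ⟨h1, h2, h3⟩ := hfacts n hn
          have hn0 : (0:ℝ) < n := by linarith
          have hL : 0 ≤ Real.log (x/(n:ℝ)) := Real.log_nonneg h3
          rw [abs_mul, abs_div]
          have habs_n : |(n:ℝ)| = n := abs_of_pos hn0
          rw [habs_n]
          have hb1 : |(moebius n:ℝ)|/(n:ℝ) ≤ 1/(n:ℝ) := by
            gcongr
            exact abs_moebius_real n
          have hH := F1_approx (x/(n:ℝ)) h3
          have hb2 : 9*(1+Real.log (x/(n:ℝ)))/(x/(n:ℝ))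
              = 9*(1+Real.log (x/(n:ℝ)))*(n:ℝ)/x := by field_simp
          rw [hb2] at hH
          have hmm := mul_le_mul hb1 hH (abs_nonneg _) (by positivity : (0:ℝ) ≤ 1/(n:ℝ))
          have e5 : 1/(n:ℝ) * (9*(1+Real.log (x/(n:ℝ)))*(n:ℝ)/x)
              = (9/x)*(1 + Real.log (x/(n:ℝ))) := by field_simp
          linarith
      _ = (9/x) * ∑ n ∈ Finset.Icc 1 N, (1 + Real.log (x/n)) := by rw [Finset.mul_sum]
      _ ≤ (9/x) * (5*x) := by
          apply mul_le_mul_of_nonneg_left (sum_one_add_log_le x hx) (by positivity)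
      _ = 45 := by field_simp; ring
  -- Step 7 : conclusion
  have ha : |S2 - 2*Real.log x|
      ≤ 2*|Real.log x - (S2/2 + c0*S1 - c1*S0)| + 2*(|c0| * |S1|) + 2*(|c1| * |S0|) := by
    have e : S2 - 2*Real.log x
        = ((-2)*(Real.log x - (S2/2 + c0*S1 - c1*S0)) + (-2)*(c0*S1)) + 2*(c1*S0) := by
      ring
    rw [e]
    have t1 := abs_add_le ((-2)*(Real.log x - (S2/2 + c0*S1 - c1*S0)) + (-2)*(c0*S1)) (2*(c1*S0))
    have t2 := abs_add_le ((-2)*(Real.log x - (S2/2 + c0*S1 - c1*S0))) ((-2)*(c0*S1))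
    have k1 : |(-2)*(Real.log x - (S2/2 + c0*S1 - c1*S0))|
        = 2*|Real.log x - (S2/2 + c0*S1 - c1*S0)| := by
      rw [abs_mul]; norm_num
    have k2 : |(-2)*(c0*S1)| = 2*(|c0| * |S1|) := by
      rw [abs_mul, abs_mul]; norm_num
    have k3 : |2*(c1*S0)| = 2*(|c1| * |S0|) := by
      rw [abs_mul, abs_mul]; norm_num
    linarith
  have hb1 : |c0| * |S1| ≤ |c0| * (4+2 * |c0|) :=
    mul_le_mul_of_nonneg_left hS1 (abs_nonneg c0)
  have hb2 : |c1| * |S0| ≤ |c1| * 2 :=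
    mul_le_mul_of_nonneg_left hS0 (abs_nonneg c1)
  calc |S2 - 2*Real.log x|
      ≤ 2*45 + 2*(|c0| * (4+2 * |c0|)) + 2*(|c1| * 2) := by linarith
    _ = 2 * |c0| * (4 + 2 * |c0|) + 4 * |c1| + 90 := by ring
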